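/- Let A be a nonempty set and for each a ∈ A let <_a be a strict linear order on a nonempty set O. The following are equivalent: (1) for all a,b ∈ A and all x,y,z ∈ O, ¬(z <_a y <_a x ∧ x <_b z <_b y); (2) there exist a partition {O_i}_{i∈I} of O and a strict linear order < on I such that (a) i < j implies x <_a y for all a ∈ A, x ∈ O_i and y ∈ O_j, and (b) for all a,b ∈ A and i ∈ I, the restriction of <_b to O_i equals the restriction of <_a to O_i or equals its inverse. Moreover, when (1) and (2) hold, the partition can be chosen so that for every i ∈ I with |O_i| > 1 there exist a,b ∈ A with <_b restricted to O_i equal to the inverse of <_a restricted to O_i. -/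

import Mathlib

/-! Basic setup: trees of finite sequences, their branches, the topology on the set of
branches, the Hausdorff difference hierarchy, quasi-difference sets, and infinite
games in extensive form. -/

/-- `T` is a tree over `α`: a set of finite sequences closed under taking prefixes. -/
def IsTree {α : Type*} (T : Set (List α)) : Prop :=
  ∀ ⦃γ δ : List α⦄, γ <+: δ → δ ∈ T → γ ∈ T

/-- `succ(T, γ)`: the nodes of `T` extending `γ` and of length `|γ| + 1`. -/
def treeSucc {α : Type*} (T : Set (List α)) (γ : List α) : Set (List α) :=
  {δ | δ ∈ T ∧ γ <+: δ ∧ δ.length = γ.length + 1}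

/-- `T` is pruned if every node has a successor. -/
def IsPruned {α : Type*} (T : Set (List α)) : Prop :=
  ∀ γ ∈ T, (treeSucc T γ).Nonempty

/-- The finite prefix of length `n` of an infinite sequence `p`. -/
def playPrefix {α : Type*} (p : ℕ → α) (n : ℕ) : List α :=
  List.ofFn fun i : Fin n => p i

/-- `[T]`: the infinite sequences all of whose finite prefixes lie in `T`. -/
def Body {α : Type*} (T : Set (List α)) : Set (ℕ → α) :=
  {p | ∀ n : ℕ, playPrefix p n ∈ T}

/-- `γ[T_γ]`: the elements of `[T]` extending the node `γ`. -/
def cylinder {α : Type*} (T : Set (List α)) (γ : List α) : Set (ℕ → α) :=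
  {p | p ∈ Body T ∧ playPrefix p γ.length = γ}

/-- Open subsets of `[T]`: the unions of basic sets `γ[T_γ]`, `γ ∈ T`. -/
def IsOpenIn {α : Type*} (T : Set (List α)) (A : Set (ℕ → α)) : Prop :=
  ∃ S ⊆ T, A = ⋃ γ ∈ S, cylinder T γ

/-- Closed subsets of `[T]`: complements in `[T]` of open subsets of `[T]`. -/
def IsClosedIn {α : Type*} (T : Set (List α)) (A : Set (ℕ → α)) : Prop :=
  A ⊆ Body T ∧ IsOpenIn T (Body T \ A)

/-- Borel subsets of `[T]`: members of the σ-algebra generated by the open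
subsets of `[T]` that are themselves included in `[T]`. -/
def IsBorelIn {α : Type*} (T : Set (List α)) (X : Set (ℕ → α)) : Prop :=
  X ⊆ Body T ∧
    @MeasurableSet (ℕ → α) (MeasurableSpace.generateFrom {A | IsOpenIn T A}) X

/-- `D_θ((A_η)_{η<θ})`: the set of `x ∈ ⋃_{η<θ} A_η` such that the least `η < θ`
with `x ∈ A_η` has parity opposite to that of `θ`. -/
noncomputable def Dset {α : Type*} (θ : Ordinal.{0}) (A : Ordinal.{0} → Set (ℕ → α)) :
    Set (ℕ → α) :=
  {x | (∃ η < θ, x ∈ A η) ∧ sInf {η | η < θ ∧ x ∈ A η} % 2 ≠ θ % 2}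

/-- `D_θ([T])`: all sets of the form `D_θ((A_η)_{η<θ})` for an `⊆`-increasing family
of open subsets of `[T]`. -/
def Dclass {α : Type*} (T : Set (List α)) (θ : Ordinal.{0}) : Set (Set (ℕ → α)) :=
  {X | ∃ A : Ordinal.{0} → Set (ℕ → α),
        (∀ η < θ, IsOpenIn T (A η)) ∧
        (∀ η₁ η₂, η₁ ≤ η₂ → η₂ < θ → A η₁ ⊆ A η₂) ∧
        X = Dset θ A}

/-- The quasi-difference sets `𝒟([T])`: open sets, unions of quasi-difference sets
placed below pairwise `⊑`-incomparable nodes, and complements in `[T]`. -/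
inductive QuasiDiff {α : Type*} (T : Set (List α)) : Set (ℕ → α) → Prop
  | isOpen : ∀ A, IsOpenIn T A → QuasiDiff T A
  | iUnion : ∀ (S : Set (List α)) (D : List α → Set (ℕ → α)),
      S ⊆ T → (S.Pairwise fun γ δ => ¬ γ <+: δ) →
      (∀ γ ∈ S, QuasiDiff T (D γ)) →
      (∀ γ ∈ S, D γ ⊆ cylinder T γ) →
      QuasiDiff T (⋃ γ ∈ S, D γ)
  | compl : ∀ A, QuasiDiff T A → QuasiDiff T (Body T \ A)

/-- An infinite game in extensive form: a tree `T` of finite plays, an owner function `d`,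
an outcome function `v` on infinite plays, and a preference relation for each player. -/
structure Game (α A O : Type*) where
  T : Set (List α)
  d : List α → A
  v : (ℕ → α) → O
  pref : A → O → O → Prop

/-- The infinite sequence starting with `γ` and continuing with `p`. -/
def listExtend {α : Type*} (γ : List α) (p : ℕ → α) : ℕ → α :=
  fun n => if h : n < γ.length then γ.get ⟨n, h⟩ else p (n - γ.length)

/-- The subgame `g_γ` of `g` at a node `γ`. -/
def Game.sub {α A O : Type*} (g : Game α A O) (γ : List α) : Game α A O where
  T := {δ | γ ++ δ ∈ g.T}
  d := fun δ => g.d (γ ++ δ)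
  v := fun p => g.v (listExtend γ p)
  pref := g.pref

/-- A strategy profile on `T`: it maps each node of `T` to a successor. -/
def IsProfile {α : Type*} (T : Set (List α)) (s : List α → List α) : Prop :=
  ∀ γ ∈ T, s γ ∈ treeSucc T γ

/-- The sequence of nodes obtained from `γ` by repeatedly applying `s`. -/
def iterNode {α : Type*} (s : List α → List α) (γ : List α) : ℕ → List α
  | 0 => γ
  | n + 1 => s (iterNode s γ n)

/-- The play `p^ε(s)` induced by `s` at the root. -/
def inducedPlay {α : Type*} [Inhabited α] (s : List α → List α) : ℕ → α :=
  fun n => (iterNode s [] (n + 1)).getD n default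

/-- The subprofile `s_γ`, defined by `γ s_γ(δ) = s(γδ)`. -/
def subProfile {α : Type*} (γ : List α) (s : List α → List α) : List α → List α :=
  fun δ => (s (γ ++ δ)).drop γ.length

/-- `s` is a Nash equilibrium of `g`: no player `a` has a profitable deviation `s'`
differing from `s` only at nodes owned by `a`. -/
def IsNE {α A O : Type*} [Inhabited α] (g : Game α A O) (s : List α → List α) : Prop :=
  ¬ ∃ (a : A) (s' : List α → List α), IsProfile g.T s' ∧
      (∀ γ ∈ g.T, s γ ≠ s' γ → g.d γ = a) ∧
      g.pref a (g.v (inducedPlay s)) (g.v (inducedPlay s'))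

/-- `s` is a subgame perfect equilibrium of `g`: `s_γ` is an NE of `g_γ` for all `γ ∈ T`. -/
def IsSPE {α A O : Type*} [Inhabited α] (g : Game α A O) (s : List α → List α) : Prop :=
  ∀ γ ∈ g.T, IsNE (g.sub γ) (subProfile γ s)

/-- The outcomes occurring in `g`. -/
def OutcomesOf {α A O : Type*} (g : Game α A O) : Set O := g.v '' Body g.T

/-- `x ∈ Os` is Pareto-optimal in `Os`. -/
def ParetoOpt {A O : Type*} (pref : A → O → O → Prop) (Os : Set O) (x : O) : Prop :=
  x ∈ Os ∧ ∀ y ∈ Os, ∀ a, pref a x y → ∃ b, pref b y x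

/-- The outcome induced by the subprofile `s_γ` in the subgame `g_γ`. -/
def subOutcome {α A O : Type*} [Inhabited α] (g : Game α A O) (s : List α → List α)
    (γ : List α) : O :=
  (g.sub γ).v (inducedPlay (subProfile γ s))

/-- Global-Pareto SPE: an SPE inducing in every subgame an outcome that is
Pareto-optimal among the outcomes occurring in that subgame. -/
def IsGPSPE {α A O : Type*} [Inhabited α] (g : Game α A O) (s : List α → List α) : Prop :=
  IsSPE g s ∧ ∀ γ ∈ g.T, ParetoOpt g.pref (OutcomesOf (g.sub γ)) (subOutcome g s γ)

/-- An `x`-pseudo-leaf: a shortest node `γ ∈ T` such that only `x` occurs in `g_γ`. -/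
def IsPseudoLeaf {α A O : Type*} (g : Game α A O) (x : O) (γ : List α) : Prop :=
  γ ∈ g.T ∧ OutcomesOf (g.sub γ) = {x} ∧
    ∀ δ, δ <+: γ → δ ≠ γ → OutcomesOf (g.sub δ) ≠ {x}

/-- A strict weak order: irreflexive, transitive, with transitive complement. -/
def IsSWO {O : Type*} (r : O → O → Prop) : Prop :=
  (∀ x, ¬ r x x) ∧ (∀ x y z, r x y → r y z → r x z) ∧
  (∀ x y z, ¬ r x y → ¬ r y z → ¬ r x z)

/-- The SPE killer does not occur in the family of preferences `lt`. -/
def NoSPEKiller {A O : Type*} (lt : A → O → O → Prop) : Prop :=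
  ∀ a b : A, ∀ x y z : O, ¬ (lt a z y ∧ lt a y x ∧ lt b x z ∧ lt b z y)

/-- A partition `P` of the outcomes together with a strict linear order `r` on its blocks,
such that blocks are ordered uniformly by every player's preference, and on each block
all preferences agree or are inverse of one another. -/
def LayeredPartition {A O : Type*} (lt : A → O → O → Prop)
    (P : Set (Set O)) (r : Set O → Set O → Prop) : Prop :=
  Setoid.IsPartition P ∧
  (∀ B ∈ P, ¬ r B B) ∧
  (∀ B ∈ P, ∀ C ∈ P, ∀ D ∈ P, r B C → r C D → r B D) ∧
  (∀ B ∈ P, ∀ C ∈ P, B ≠ C → r B C ∨ r C B) ∧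
  (∀ B ∈ P, ∀ C ∈ P, r B C → ∀ a : A, ∀ x ∈ B, ∀ y ∈ C, lt a x y) ∧
  (∀ a b : A, ∀ B ∈ P,
    (∀ x ∈ B, ∀ y ∈ B, (lt b x y ↔ lt a x y)) ∨
    (∀ x ∈ B, ∀ y ∈ B, (lt b x y ↔ lt a y x)))

set_option autoImplicit false
set_option linter.unusedSectionVars false

namespace Stmt8Aux

variable {A O : Type*}

def D (lt : A → O → O → Prop) (x y : O) : Prop := ∃ a b, lt a x y ∧ lt b y x

section
variable {lt : A → O → O → Prop} (hlin : ∀ a, IsStrictTotalOrder O (lt a))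
include hlin

lemma asym {a : A} {x y : O} (h : lt a x y) : ¬ lt a y x := fun h' =>
  (hlin a).toIrrefl.irrefl x ((hlin a).toIsTrans.trans x y x h h')

lemma ltrans {a : A} {x y z : O} (h : lt a x y) (h' : lt a y z) : lt a x z :=
  (hlin a).toIsTrans.trans x y z h h'

lemma lirr {a : A} {x : O} : ¬ lt a x x := (hlin a).toIrrefl.irrefl x

lemma tri {a : A} {x y : O} (hxy : x ≠ y) : lt a x y ∨ lt a y x := by
  rcases (haveI := hlin a; trichotomous (r := lt a) x y) with h | h | h
  · exact Or.inl h
  · exact absurd h hxy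
  · exact Or.inr h

lemma ne_of_lt {a : A} {x y : O} (h : lt a x y) : x ≠ y := by
  rintro rfl; exact lirr hlin h

lemma D_symm {x y : O} (h : D lt x y) : D lt y x := by
  obtain ⟨a, b, h1, h2⟩ := h; exact ⟨b, a, h2, h1⟩

lemma D_ne {x y : O} (h : D lt x y) : x ≠ y := by
  rintro rfl; obtain ⟨a, b, h1, _⟩ := h; exact lirr hlin h1

variable (hNSK : NoSPEKiller lt)
include hNSK

lemma rot {p q : A} {u v w : O}
    (h1 : lt p w v) (h2 : lt p v u) (h3 : lt q u w) (h4 : lt q w v) : False :=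
  hNSK p q u v w ⟨h1, h2, h3, h4⟩

lemma T1false {a b c : A} {x y z : O}
    (hxy : lt a x y) (hyx : lt b y x) (hc : lt c z x)
    (haxz : lt a x z) (hbxz : lt b x z) : False := by
  rcases eq_or_ne y z with rfl | hyz
  · exact asym hlin hyx hbxz
  rcases tri hlin (a := a) hyz with hayz | hazy
  · rcases tri hlin (a := c) (ne_of_lt hlin hxy) with hcxy | hcyx
    · exact rot hlin hNSK hxy hayz hc hcxy
    · rcases tri hlin (a := c) hyz with hcyz | hczy
      · exact rot hlin hNSK hcyz hc hxy hayz
      · exact rot hlin hNSK hyx hbxz hczy hcyx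
  · exact rot hlin hNSK haxz hazy hyx hbxz

lemma T2false {a b c : A} {x y z : O}
    (hxy : lt a x y) (hyx : lt b y x) (hc : lt c y z)
    (hazx : lt a z x) (hbzx : lt b z x) : False := by
  rcases eq_or_ne y z with rfl | hyz
  · exact asym hlin hxy hazx
  rcases tri hlin (a := b) hyz with hbyz | hbzy
  · exact rot hlin hNSK hazx hxy hbyz hbzx
  · rcases tri hlin (a := c) (ne_of_lt hlin hazx) with hczx | hcxz
    · exact rot hlin hNSK hazx hxy hc hczx
    · rcases tri hlin (a := c) (ne_of_lt hlin hxy) with hcxy | hcyx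
      · exact rot hlin hNSK hcxy hc hazx hxy
      · exact rot hlin hNSK hcyx hcxz hbzy hyx

lemma D_trans' {x y z : O} (hxy : D lt x y) (hyz : D lt y z) : x = z ∨ D lt x z := by
  by_contra hcon
  push_neg at hcon
  obtain ⟨hne, hnd⟩ := hcon
  obtain ⟨a1, b1, h1, h2⟩ := hxy
  obtain ⟨c1, d1, h3, h4⟩ := hyz
  have hall : (∀ p, lt p x z) ∨ (∀ p, lt p z x) := by
    rcases tri hlin (a := a1) hne with h | h
    · left; intro p
      rcases tri hlin (a := p) hne with h' | h'
      · exact h'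
      · exact absurd ⟨a1, p, h, h'⟩ hnd
    · right; intro p
      rcases tri hlin (a := p) hne with h' | h'
      · exact absurd ⟨p, a1, h', h⟩ hnd
      · exact h'
  rcases hall with h | h
  · exact rot hlin hNSK (h d1) h4 h2 (h b1)
  · exact rot hlin hNSK (h a1) h1 h3 (h c1)

end

/-- The equivalence relation whose classes are the blocks. -/
def mySetoid {lt : A → O → O → Prop} (hlin : ∀ a, IsStrictTotalOrder O (lt a))
    (hNSK : NoSPEKiller lt) : Setoid O where
  r x y := x = y ∨ D lt x y
  iseqv := by
    constructor
    · intro x; exact Or.inl rfl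
    · rintro x y (rfl | h)
      · exact Or.inl rfl
      · exact Or.inr (D_symm hlin h)
    · rintro x y z (rfl | h1) h2
      · exact h2
      · rcases h2 with rfl | h2
        · exact Or.inr h1
        · exact D_trans' hlin hNSK h1 h2

/-- Opposite preferences on a pair. -/
def OppOn (lt : A → O → O → Prop) (a b : A) (u v : O) : Prop := lt b u v ↔ lt a v u

section
variable {lt : A → O → O → Prop} (hlin : ∀ a, IsStrictTotalOrder O (lt a))
include hlin

lemma oppOn_swap {a b : A} {u v : O} (huv : u ≠ v) (h : OppOn lt a b u v) :
    OppOn lt b a u v := by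
  constructor
  · intro hauv
    rcases tri hlin (a := b) huv.symm with h' | h'
    · exact h'
    · exact absurd (h.1 h') (asym hlin hauv)
  · intro hbvu
    rcases tri hlin (a := a) huv with h' | h'
    · exact h'
    · exact absurd (h.2 h') (asym hlin hbvu)

lemma oppOn_symm {a b : A} {u v : O} (huv : u ≠ v) (h : OppOn lt a b u v) :
    OppOn lt a b v u := by
  constructor
  · intro hbvu
    rcases tri hlin (a := a) huv with h' | h'
    · exact h'
    · exact absurd (h.2 h') (asym hlin hbvu)
  · intro hauv
    rcases tri hlin (a := b) huv.symm with h' | h'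
    · exact h'
    · exact absurd (h.1 h') (asym hlin hauv)

variable (hNSK : NoSPEKiller lt)
include hNSK

lemma half_step {a b : A} {u v w : O}
    (hauv : lt a u v) (hbvu : lt b v u) (hDuw : D lt u w) (hDvw : D lt v w) :
    OppOn lt a b u w := by
  have huw : u ≠ w := D_ne hlin hDuw
  constructor
  · intro hbuw
    by_contra hn
    have hauw : lt a u w := (tri hlin huw).resolve_right hn
    obtain ⟨p, q, _, hqwu⟩ := hDuw
    exact (T1false hlin hNSK hauv hbvu hqwu hauw hbuw).elim
  · intro hawu
    by_contra hn
    have hbwu : lt b w u := (tri hlin huw.symm).resolve_right hn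
    obtain ⟨p, q, hpvw, _⟩ := hDvw
    exact (T2false hlin hNSK hauv hbvu hpvw hawu hbwu).elim

end

end Stmt8Aux

namespace Stmt8Aux

section
variable {A O : Type*} {lt : A → O → O → Prop} (hlin : ∀ a, IsStrictTotalOrder O (lt a))
  (hNSK : NoSPEKiller lt)

lemma mySetoid_iff {x y : O} : (mySetoid hlin hNSK) x y ↔ (x = y ∨ D lt x y) := Iff.rfl

include hlin hNSK

lemma mem_block_rel {B : Set O} (hB : B ∈ (mySetoid hlin hNSK).classes)
    {u v : O} (hu : u ∈ B) (hv : v ∈ B) : u = v ∨ D lt u v := by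
  obtain ⟨t, rfl⟩ := hB
  exact (mySetoid_iff hlin hNSK).mp (Setoid.trans' _ hu (Setoid.symm' _ hv))

lemma block_eq_of_rel {B C : Set O} (hB : B ∈ (mySetoid hlin hNSK).classes)
    (hC : C ∈ (mySetoid hlin hNSK).classes) {u v : O} (hu : u ∈ B) (hv : v ∈ C)
    (huv : (mySetoid hlin hNSK) u v) : B = C := by
  obtain ⟨t, rfl⟩ := hB
  obtain ⟨t', rfl⟩ := hC
  have htt' : (mySetoid hlin hNSK) t t' :=
    Setoid.trans' _ (Setoid.symm' _ hu) (Setoid.trans' _ huv hv)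
  ext w
  exact ⟨fun h => Setoid.trans' _ h htt', fun h => Setoid.trans' _ h (Setoid.symm' _ htt')⟩

lemma block_sep {B C : Set O} (hB : B ∈ (mySetoid hlin hNSK).classes)
    (hC : C ∈ (mySetoid hlin hNSK).classes) (hne : B ≠ C) {u v : O}
    (hu : u ∈ B) (hv : v ∈ C) : u ≠ v ∧ ¬ D lt u v := by
  constructor
  · rintro rfl
    exact hne (block_eq_of_rel hlin hNSK hB hC hu hv (Setoid.refl' _ u))
  · intro hd
    exact hne (block_eq_of_rel hlin hNSK hB hC hu hv (Or.inr hd))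

lemma block_opp {B : Set O} (hB : B ∈ (mySetoid hlin hNSK).classes)
    {x y : O} (hx : x ∈ B) (hy : y ∈ B) {a b : A}
    (haxy : lt a x y) (hbyx : lt b y x) :
    ∀ u ∈ B, ∀ v ∈ B, (lt b u v ↔ lt a v u) := by
  have hDin : ∀ u ∈ B, ∀ v ∈ B, u ≠ v → D lt u v := fun u hu v hv huv =>
    (mem_block_rel hlin hNSK hB hu hv).resolve_left huv
  have hxy : x ≠ y := ne_of_lt hlin haxy
  have Hx : ∀ w ∈ B, w ≠ x → OppOn lt a b x w := by
    intro w hw hwx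
    rcases eq_or_ne w y with rfl | hwy
    · exact iff_of_false (asym hlin hbyx) (asym hlin haxy)
    · exact half_step hlin hNSK haxy hbyx (hDin x hx w hw (Ne.symm hwx))
        (hDin y hy w hw (Ne.symm hwy))
  have Hy : ∀ w ∈ B, w ≠ y → OppOn lt a b y w := by
    intro w hw hwy
    rcases eq_or_ne w x with rfl | hwx
    · exact iff_of_true hbyx haxy
    · exact oppOn_swap hlin (Ne.symm hwy)
        (half_step hlin hNSK hbyx haxy (hDin y hy w hw (Ne.symm hwy))
          (hDin x hx w hw (Ne.symm hwx)))
  intro u hu v hv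
  rcases eq_or_ne u v with rfl | huv
  · exact iff_of_false (lirr hlin) (lirr hlin)
  by_cases hux : u = x
  · subst hux; exact Hx v hv (Ne.symm huv)
  by_cases huy : u = y
  · subst huy; exact Hy v hv (Ne.symm huv)
  have h1 : OppOn lt a b x u := Hx u hu hux
  by_cases hvx : v = x
  · subst hvx; exact oppOn_symm hlin (Ne.symm hux) h1
  by_cases hvy : v = y
  · subst hvy; exact oppOn_symm hlin (Ne.symm huy) (Hy u hu huy)
  have hDuv : D lt u v := hDin u hu v hv huv
  have hDxv : D lt x v := hDin x hx v hv (Ne.symm hvx)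
  rcases tri hlin (a := a) (Ne.symm hux : x ≠ u) with haxu | haux
  · have hnbxu : ¬ lt b x u := fun h => asym hlin haxu (h1.1 h)
    have hbux : lt b u x := (tri hlin (Ne.symm hux : x ≠ u) (a := b)).resolve_left hnbxu
    exact oppOn_swap hlin huv
      (half_step hlin hNSK hbux haxu hDuv hDxv)
  · have hbxu : lt b x u := h1.2 haux
    exact half_step hlin hNSK haux hbxu hDuv hDxv

end

end Stmt8Aux


/-- for strict linear preferences, the absence of the SPE killer is
equivalent to the existence of a layered partition of the outcomes; moreover the
partition can be chosen so that on each non-singleton block an inverse pair of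
preferences is witnessed. -/
theorem stmt8 {A O : Type*} [Nonempty A] [Nonempty O] (lt : A → O → O → Prop)
    (hlin : ∀ a, IsStrictTotalOrder O (lt a)) :
    (NoSPEKiller lt ↔ ∃ P r, LayeredPartition lt P r) ∧
    (NoSPEKiller lt → ∃ P r, LayeredPartition lt P r ∧
      ∀ B ∈ P, (∃ x ∈ B, ∃ y ∈ B, x ≠ y) →
        ∃ a b : A, ∀ x ∈ B, ∀ y ∈ B, (lt b x y ↔ lt a y x)) := by
  classical
  have conv : (∃ P r, LayeredPartition lt P r) → NoSPEKiller lt := by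
    rintro ⟨P, r, hpart, hirr, _htr, htot, hord, hblk⟩ a b x y z ⟨h1, h2, h3, h4⟩
    obtain ⟨Bx, ⟨hBx, hxBx⟩, _⟩ := hpart.2 x
    obtain ⟨By, ⟨hBy, hyBy⟩, _⟩ := hpart.2 y
    obtain ⟨Bz, ⟨hBz, hzBz⟩, _⟩ := hpart.2 z
    have hazx : lt a z x := Stmt8Aux.ltrans hlin h1 h2
    have hbxy : lt b x y := Stmt8Aux.ltrans hlin h3 h4
    have hBxz : Bx = Bz := by
      by_contra hne
      rcases htot Bx hBx Bz hBz hne with h | h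
      · exact Stmt8Aux.asym hlin hazx (hord Bx hBx Bz hBz h a x hxBx z hzBz)
      · exact Stmt8Aux.asym hlin h3 (hord Bz hBz Bx hBx h b z hzBz x hxBx)
    have hByx : By = Bx := by
      by_contra hne
      rcases htot By hBy Bx hBx hne with h | h
      · exact Stmt8Aux.asym hlin hbxy (hord By hBy Bx hBx h b y hyBy x hxBx)
      · exact Stmt8Aux.asym hlin h2 (hord Bx hBx By hBy h a x hxBx y hyBy)
    have hz' : z ∈ Bx := hBxz ▸ hzBz
    have hy' : y ∈ Bx := hByx ▸ hyBy
    rcases hblk a b Bx hBx with hsame | hopp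
    · exact Stmt8Aux.asym hlin hazx ((hsame x hxBx z hz').mp h3)
    · exact Stmt8Aux.asym hlin h1 ((hopp z hz' y hy').mp h4)
  have main : NoSPEKiller lt → ∃ P r, LayeredPartition lt P r ∧
      ∀ B ∈ P, (∃ x ∈ B, ∃ y ∈ B, x ≠ y) →
        ∃ a b : A, ∀ x ∈ B, ∀ y ∈ B, (lt b x y ↔ lt a y x) := by
    intro hNSK
    set s : Setoid O := Stmt8Aux.mySetoid hlin hNSK with hs
    set P : Set (Set O) := s.classes with hP
    set r : Set O → Set O → Prop :=
      fun B C => ∃ x ∈ B, ∃ y ∈ C, ∀ p, lt p x y with hr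
    have hmem : ∀ B ∈ P, ∀ u ∈ B, ∀ v ∈ B, u = v ∨ Stmt8Aux.D lt u v :=
      fun B hB u hu v hv => Stmt8Aux.mem_block_rel hlin hNSK hB hu hv
    have hsep : ∀ B ∈ P, ∀ C ∈ P, B ≠ C → ∀ u ∈ B, ∀ v ∈ C,
        u ≠ v ∧ ¬ Stmt8Aux.D lt u v :=
      fun B hB C hC hne u hu v hv => Stmt8Aux.block_sep hlin hNSK hB hC hne hu hv
    -- cross-block uniformity helpers
    have shiftL : ∀ {x x' y : O}, (∀ p, lt p x y) → (x = x' ∨ Stmt8Aux.D lt x x') →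
        ¬ Stmt8Aux.D lt x' y → x' ≠ y → ∀ p, lt p x' y := by
      rintro x x' y hall (rfl | hD) hnd hne p
      · exact hall p
      · rcases Stmt8Aux.tri hlin (a := p) hne with h | h
        · exact h
        · obtain ⟨c, d, hc, hd⟩ := hD
          exact absurd ⟨d, p, Stmt8Aux.ltrans hlin hd (hall d), h⟩ hnd
    have shiftR : ∀ {x y y' : O}, (∀ p, lt p x y) → (y = y' ∨ Stmt8Aux.D lt y y') →
        ¬ Stmt8Aux.D lt x y' → x ≠ y' → ∀ p, lt p x y' := by
      rintro x y y' hall (rfl | hD) hnd hne p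
      · exact hall p
      · rcases Stmt8Aux.tri hlin (a := p) hne with h | h
        · exact h
        · obtain ⟨c, d, hc, hd⟩ := hD
          exact absurd ⟨c, p, Stmt8Aux.ltrans hlin (hall c) hc, h⟩ hnd
    have hirr : ∀ B ∈ P, ¬ r B B := by
      rintro B hB ⟨x, hx, y, hy, hall⟩
      have a0 : A := Classical.arbitrary A
      have hne : x ≠ y := Stmt8Aux.ne_of_lt hlin (hall a0)
      obtain ⟨c, d, _, hd⟩ := (hmem B hB x hx y hy).resolve_left hne
      exact Stmt8Aux.asym hlin (hall d) hd
    have hord : ∀ B ∈ P, ∀ C ∈ P, r B C → ∀ a : A, ∀ x ∈ B, ∀ y ∈ C, lt a x y := by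
      rintro B hB C hC ⟨x0, hx0, y0, hy0, hall⟩ a x hx y hy
      have hne : B ≠ C := by rintro rfl; exact hirr B hB ⟨x0, hx0, y0, hy0, hall⟩
      have h1 : ∀ p, lt p x y0 :=
        shiftL hall (hmem B hB x0 hx0 x hx) ((hsep B hB C hC hne x hx y0 hy0).2)
          ((hsep B hB C hC hne x hx y0 hy0).1)
      have h2 : ∀ p, lt p x y :=
        shiftR h1 (hmem C hC y0 hy0 y hy) ((hsep B hB C hC hne x hx y hy).2)
          ((hsep B hB C hC hne x hx y hy).1)
      exact h2 a
    have htot : ∀ B ∈ P, ∀ C ∈ P, B ≠ C → r B C ∨ r C B := by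
      intro B hB C hC hne
      obtain ⟨t, rfl⟩ := hB
      obtain ⟨t', rfl⟩ := hC
      have hx : t ∈ {x | s x t} := Setoid.refl' s t
      have hy : t' ∈ {x | s x t'} := Setoid.refl' s t'
      obtain ⟨hnexy, hnd⟩ := hsep _ (Setoid.mem_classes s t) _ (Setoid.mem_classes s t')
        hne t hx t' hy
      have a0 : A := Classical.arbitrary A
      rcases Stmt8Aux.tri hlin (a := a0) hnexy with h | h
      · left
        refine ⟨t, hx, t', hy, fun p => ?_⟩
        rcases Stmt8Aux.tri hlin (a := p) hnexy with h' | h'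
        · exact h'
        · exact absurd ⟨a0, p, h, h'⟩ hnd
      · right
        refine ⟨t', hy, t, hx, fun p => ?_⟩
        rcases Stmt8Aux.tri hlin (a := p) hnexy.symm with h' | h'
        · exact h'
        · exact absurd ⟨p, a0, h', h⟩ hnd
    have htr : ∀ B ∈ P, ∀ C ∈ P, ∀ E ∈ P, r B C → r C E → r B E := by
      rintro B hB C hC E hE hBC ⟨y', hy', w, hw, hall2⟩
      obtain ⟨x, hx, y, hy, hall1⟩ := hBC
      have hneBC : B ≠ C := by rintro rfl; exact hirr B hB ⟨x, hx, y, hy, hall1⟩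
      have h1 : ∀ p, lt p x y' :=
        shiftR hall1 (hmem C hC y hy y' hy') ((hsep B hB C hC hneBC x hx y' hy').2)
          ((hsep B hB C hC hneBC x hx y' hy').1)
      exact ⟨x, hx, w, hw, fun p => Stmt8Aux.ltrans hlin (h1 p) (hall2 p)⟩
    have hblk : ∀ a b : A, ∀ B ∈ P,
        (∀ x ∈ B, ∀ y ∈ B, (lt b x y ↔ lt a x y)) ∨
        (∀ x ∈ B, ∀ y ∈ B, (lt b x y ↔ lt a y x)) := by
      intro a b B hB
      by_cases H : ∀ x ∈ B, ∀ y ∈ B, lt a x y → lt b x y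
      · left
        intro x hx y hy
        constructor
        · intro hbxy
          have hne : x ≠ y := Stmt8Aux.ne_of_lt hlin hbxy
          rcases Stmt8Aux.tri hlin (a := a) hne with h | h
          · exact h
          · exact absurd (H y hy x hx h) (Stmt8Aux.asym hlin hbxy)
        · exact H x hx y hy
      · right
        push_neg at H
        obtain ⟨x, hx, y, hy, haxy, hnb⟩ := H
        have hne : x ≠ y := Stmt8Aux.ne_of_lt hlin haxy
        have hbyx : lt b y x := (Stmt8Aux.tri hlin (a := b) hne).resolve_left hnb
        exact Stmt8Aux.block_opp hlin hNSK hB hx hy haxy hbyx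
    refine ⟨P, r, ⟨Setoid.isPartition_classes s, hirr, htr, htot, hord, hblk⟩, ?_⟩
    rintro B hB ⟨x, hx, y, hy, hne⟩
    obtain ⟨a, b, haxy, hbyx⟩ := (hmem B hB x hx y hy).resolve_left hne
    exact ⟨a, b, Stmt8Aux.block_opp hlin hNSK hB hx hy haxy hbyx⟩
  exact ⟨⟨fun h => (main h).imp fun P hP => hP.imp fun r h' => h'.1, conv⟩, main⟩
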